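/- Let H be a connected graph on k ≥ 2 vertices such that for every independent set S ⊆ V(H), the subgraph of H induced on V(H) \ S is connected. Let h ≥ 1, ε > 0, and let G be a simple graph on n vertices that is ε-far from being H-free and semi-bipartite with respect to h (the set of vertices of degree at least h is independent in G). For a vertex v of G, let B(v) denote the set of vertices u for which there exists a walk v = x₀, x₁, …, x_j = u in G with j ≤ k such that every vertex x₀, …, x_{j−1} has degree less than h in G. Then there are more than ε·n/h vertices v with deg_G(v) < h such that the subgraph of G induced on B(v) contains a copy of H. -/

import Mathlib

open Finset SimpleGraph
open scoped Classical

/-- `f : A → V` realizes a copy of `H` in `G`: it is injective and maps edges of `H`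
to edges of `G`.  The copy itself is the subgraph of `G` whose edge set is the image
of the edge set of `H`. -/
def IsCopy {A V : Type*} (H : SimpleGraph A) (G : SimpleGraph V) (f : A → V) : Prop :=
  Function.Injective f ∧ ∀ a b : A, H.Adj a b → G.Adj (f a) (f b)

/-- `G` contains a copy of `H` (a subgraph isomorphic to `H`). -/
def ContainsCopy {A V : Type*} (H : SimpleGraph A) (G : SimpleGraph V) : Prop :=
  ∃ f : A → V, IsCopy H G f

/-- The edge set of the copy of `H` in `G` realized by `f`. -/
noncomputable def copyEdges {A V : Type*} [Fintype A] [DecidableEq V]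
    (H : SimpleGraph A) (f : A → V) : Finset (Sym2 V) :=
  H.edgeFinset.image (Sym2.map f)

/-- `𝒞` is a collection of pairwise edge-disjoint copies of `H` in `G`. -/
def EdgeDisjointCopies {A V : Type*} [Fintype A] [DecidableEq V]
    (H : SimpleGraph A) (G : SimpleGraph V) (𝒞 : Finset (A → V)) : Prop :=
  (∀ f ∈ 𝒞, IsCopy H G f) ∧
    ∀ f ∈ 𝒞, ∀ g ∈ 𝒞, f ≠ g → Disjoint (copyEdges H f) (copyEdges H g)

/-- `G` is `p`-degenerate: every nonempty finite vertex set `U` contains a vertex with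
at most `p` neighbours inside `U`. -/
def Degenerate {V : Type*} (G : SimpleGraph V) (p : ℕ) : Prop :=
  ∀ U : Finset V, U.Nonempty → ∃ v ∈ U, (U.filter fun u => G.Adj v u).card ≤ p

/-- `G` is `c`-far (in absolute number of edges) from being `H`-free: deleting any set
of at most `c` edges from `G` leaves a graph that contains a copy of `H`. -/
def FarFromFree {A V : Type*} (H : SimpleGraph A) (G : SimpleGraph V) (c : ℝ) : Prop :=
  ∀ D : Finset (Sym2 V), (D.card : ℝ) ≤ c → ContainsCopy H (G.deleteEdges ↑D)

/-- The number of members of the collection `𝒦` whose copy contains the vertex `v`. -/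
noncomputable def collDeg {A V : Type*} (𝒦 : Finset (A → V)) (v : V) : ℕ :=
  (𝒦.filter fun φ => v ∈ Set.range φ).card

/-- Let `H` be a connected graph on `k ≥ 2` vertices such that removing
any independent set leaves a connected graph.  Suppose `G` on `n` vertices is `ε`-far from
being `H`-free and the set of vertices of degree at least `h` is independent in `G`.  For a
vertex `v`, let `B v` be the set of vertices reachable from `v` by a walk of length at most
`k` all of whose vertices except possibly the last have degree less than `h`.  Then more
than `ε·n/h` vertices `v` of degree less than `h` are such that the subgraph of `G` induced
on `B v` contains a copy of `H`. -/
theorem statement_15 {A V : Type*} [Fintype A] [Fintype V] [DecidableEq V]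
    (k n h : ℕ) (hk : 2 ≤ k) (hh : 1 ≤ h) (ε : ℝ) (hε : 0 < ε)
    (H : SimpleGraph A) (hA : Fintype.card A = k) (hconn : H.Connected)
    (hprop : ∀ S : Set A, (∀ a ∈ S, ∀ b ∈ S, ¬ H.Adj a b) → (H.induce Sᶜ).Connected)
    (G : SimpleGraph V) (hV : Fintype.card V = n)
    (hfar : FarFromFree H G (ε * n))
    (hsemi : ∀ u v : V, h ≤ G.degree u → h ≤ G.degree v → ¬ G.Adj u v)
    (B : V → Set V)
    (hB : ∀ v : V, B v = {u : V |
      ∃ (j : ℕ) (x : ℕ → V), j ≤ k ∧ x 0 = v ∧ x j = u ∧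
        (∀ i < j, G.Adj (x i) (x (i + 1))) ∧ (∀ i < j, G.degree (x i) < h)}) :
    ε * n / h <
      ((Finset.univ.filter fun v : V =>
        G.degree v < h ∧ ContainsCopy H (G.induce (B v))).card : ℝ) := by
  classical
  have hh' : (0:ℝ) < h := by exact_mod_cast hh
  -- every vertex of H has a neighbour
  have hHadj : ∀ a : A, ∃ b, H.Adj a b := by
    intro a
    obtain ⟨b, hb⟩ := Fintype.exists_ne_of_one_lt_card (by omega) a
    obtain ⟨w⟩ := hconn.preconnected a b
    cases w with
    | nil => exact absurd rfl hb.symm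
    | cons hadj p => exact ⟨_, hadj⟩
  set W : Finset V := Finset.univ.filter fun v : V =>
      G.degree v < h ∧ ContainsCopy H (G.induce (B v)) with hW
  -- key lemma: every copy of H in G yields a good vertex in its image
  have key : ∀ f : A → V, IsCopy H G f →
      ∃ a : A, G.degree (f a) < h ∧ ContainsCopy H (G.induce (B (f a))) := by
    intro f hf
    set S : Set A := {a | h ≤ G.degree (f a)} with hS
    have hind : ∀ a ∈ S, ∀ b ∈ S, ¬ H.Adj a b := by
      intro a ha b hb hab
      exact hsemi (f a) (f b) ha hb (hf.2 a b hab)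
    have hc : (H.induce Sᶜ).Connected := hprop S hind
    obtain ⟨a₀⟩ := hc.nonempty
    have ha₀light : G.degree (f (a₀ : A)) < h := lt_of_not_ge a₀.2
    have hcard : Fintype.card ↥(Sᶜ) ≤ k := by
      rw [← hA]
      exact Fintype.card_le_of_injective Subtype.val Subtype.val_injective
    -- membership of all copy vertices in the ball
    have hmem : ∀ b : A, f b ∈ B (f (a₀ : A)) := by
      intro b
      rw [hB]
      by_cases hbS : b ∈ S
      · -- b heavy: go to a light neighbour of b and then step to b
        obtain ⟨c, hbc⟩ := hHadj b
        have hcS : c ∈ Sᶜ := fun hc' => hind b hbS c hc' hbc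
        obtain ⟨w⟩ := hc.preconnected a₀ ⟨c, hcS⟩
        set p := w.toPath with hp
        have hlen : p.val.length < Fintype.card ↥(Sᶜ) := p.2.length_lt
        refine ⟨p.val.length + 1,
          fun i => if i ≤ p.val.length then f ((p.val.getVert i : ↥(Sᶜ)) : A) else f b,
          by omega, ?_, ?_, ?_, ?_⟩
        · simp [SimpleGraph.Walk.getVert_zero]
        · simp
        · intro i hi
          dsimp only
          rcases Nat.lt_or_ge i p.val.length with hil | hil
          · rw [if_pos (Nat.le_of_lt hil), if_pos (Nat.succ_le_of_lt hil)]
            exact hf.2 _ _ (p.val.adj_getVert_succ hil)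
          · have hieq : i = p.val.length := by omega
            subst hieq
            rw [if_pos le_rfl, if_neg (by omega), SimpleGraph.Walk.getVert_length]
            exact hf.2 _ _ hbc.symm
        · intro i hi
          have hi' : i ≤ p.val.length := by omega
          dsimp only
          have hgen : ∀ x : V, x = f ((p.val.getVert i : ↥(Sᶜ)) : A) → G.degree x < h := by
            rintro x rfl
            exact lt_of_not_ge (p.val.getVert i).2
          exact hgen _ (if_pos hi')
      · -- b light: path inside the light part
        obtain ⟨w⟩ := hc.preconnected a₀ ⟨b, hbS⟩
        set p := w.toPath with hp
        have hlen : p.val.length < Fintype.card ↥(Sᶜ) := p.2.length_lt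
        refine ⟨p.val.length,
          fun i => f ((p.val.getVert i : ↥(Sᶜ)) : A), by omega, ?_, ?_, ?_, ?_⟩
        · simp [SimpleGraph.Walk.getVert_zero]
        · simp [SimpleGraph.Walk.getVert_length]
        · intro i hi
          exact hf.2 _ _ (p.val.adj_getVert_succ hi)
        · intro i hi
          exact lt_of_not_ge (p.val.getVert i).2
    refine ⟨a₀, ha₀light, ⟨fun b => ⟨f b, hmem b⟩, ?_, ?_⟩⟩
    · intro b c hbc
      exact hf.1 (congrArg Subtype.val hbc)
    · intro b c hbc
      exact hf.2 b c hbc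
  -- counting argument
  by_contra hcon
  push_neg at hcon
  set D : Finset (Sym2 V) := G.edgeFinset.filter (fun e => ∃ v ∈ W, v ∈ e) with hD
  have hDsub : D ⊆ W.biUnion fun v => G.incidenceFinset v := by
    intro e he
    rw [hD, Finset.mem_filter] at he
    obtain ⟨v, hvW, hve⟩ := he.2
    refine Finset.mem_biUnion.mpr ⟨v, hvW, ?_⟩
    rw [SimpleGraph.mem_incidenceFinset]
    exact ⟨SimpleGraph.mem_edgeFinset.mp he.1, hve⟩
  have hDcard : D.card ≤ W.card * h := by
    calc D.card ≤ (W.biUnion fun v => G.incidenceFinset v).card := Finset.card_le_card hDsub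
    _ ≤ ∑ v ∈ W, (G.incidenceFinset v).card := Finset.card_biUnion_le
    _ ≤ ∑ v ∈ W, h := by
        refine Finset.sum_le_sum fun v hv => ?_
        rw [SimpleGraph.card_incidenceFinset_eq_degree]
        exact le_of_lt (Finset.mem_filter.mp hv).2.1
    _ = W.card * h := by rw [Finset.sum_const, smul_eq_mul]
  have hDreal : (D.card : ℝ) ≤ ε * n := by
    have h1 : (D.card : ℝ) ≤ (W.card : ℝ) * h := by exact_mod_cast hDcard
    have h2 : (W.card : ℝ) * h ≤ (ε * n / h) * h := by
      exact mul_le_mul_of_nonneg_right hcon (le_of_lt hh')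
    rw [div_mul_cancel₀ _ (ne_of_gt hh')] at h2
    linarith
  obtain ⟨f, hf⟩ := hfar D hDreal
  have hfG : IsCopy H G f :=
    ⟨hf.1, fun a b hab => ((SimpleGraph.deleteEdges_adj).mp (hf.2 a b hab)).1⟩
  obtain ⟨a, halight, hacopy⟩ := key f hfG
  have haW : f a ∈ W := by
    rw [hW, Finset.mem_filter]
    exact ⟨Finset.mem_univ _, halight, hacopy⟩
  obtain ⟨b, hab⟩ := hHadj a
  have hadj := hf.2 a b hab
  rw [SimpleGraph.deleteEdges_adj] at hadj
  refine hadj.2 ?_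
  have : s(f a, f b) ∈ D := by
    rw [hD, Finset.mem_filter]
    exact ⟨SimpleGraph.mem_edgeFinset.mpr (hfG.2 a b hab),
      ⟨f a, haW, by simp⟩⟩
  exact_mod_cast this
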